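/- For any probability vector q on a finite set A and any function f: A → R with Σ_a q(a) f(a) = 0, one has max_a f(a) ≤ (√|A| / c) · sqrt(Σ_a (q(a) f(a))^2), where c = Σ_{a ∈ argmax f} q(a), provided c > 0. -/

import Mathlib

open Finset

/-- Core inequality of the non-uniform Łojasiewicz lemma: if `q` is a probability vector,
`∑_a q(a) f(a) = 0`, and `c` is the `q`-mass of the argmax set of `f` with `c > 0`, then
`max_a f(a) ≤ (√|A|/c) · sqrt(∑_a (q(a) f(a))²)`. -/
theorem lojasiewicz_core {A : Type*} [Fintype A] [Nonempty A] [DecidableEq A]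
    (q f : A → ℝ) (hq0 : ∀ a, 0 ≤ q a) (hq1 : ∑ a, q a = 1)
    (hqf : ∑ a, q a * f a = 0)
    (c : ℝ)
    (hc : c = ∑ a ∈ Finset.univ.filter
        (fun a => f a = Finset.univ.sup' Finset.univ_nonempty f), q a)
    (hcpos : 0 < c) :
    Finset.univ.sup' Finset.univ_nonempty f ≤
      (Real.sqrt (Fintype.card A) / c) * Real.sqrt (∑ a, (q a * f a) ^ 2) := by
  set M := Finset.univ.sup' Finset.univ_nonempty f with hM
  set S := Finset.univ.filter (fun a => f a = M) with hS
  have hrhs0 : 0 ≤ (Real.sqrt (Fintype.card A) / c) * Real.sqrt (∑ a, (q a * f a) ^ 2) :=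
    mul_nonneg (div_nonneg (Real.sqrt_nonneg _) hcpos.le) (Real.sqrt_nonneg _)
  rcases le_or_gt M 0 with hM0 | hM0
  · exact hM0.trans hrhs0
  -- Step 1: c * M ≤ ∑ |q a * f a|
  have hsplit : ∑ a ∈ S, q a * f a + ∑ a ∈ Sᶜ, q a * f a = 0 := by
    rw [Finset.sum_add_sum_compl]; exact hqf
  have hcM : c * M = ∑ a ∈ S, q a * f a := by
    rw [hc, Finset.sum_mul]
    refine Finset.sum_congr rfl fun a ha => ?_
    rw [(Finset.mem_filter.mp ha).2]
  have h1 : c * M ≤ ∑ a, |q a * f a| := by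
    have : c * M = -∑ a ∈ Sᶜ, q a * f a := by linarith [hsplit, hcM]
    calc c * M = -∑ a ∈ Sᶜ, q a * f a := this
      _ ≤ ∑ a ∈ Sᶜ, |q a * f a| := by
          rw [← Finset.sum_neg_distrib]
          exact Finset.sum_le_sum fun a _ => neg_le_abs _
      _ ≤ ∑ a, |q a * f a| :=
          Finset.sum_le_sum_of_subset_of_nonneg (Finset.subset_univ _)
            (fun a _ _ => abs_nonneg _)
  -- Step 2: Cauchy–Schwarz
  have h2 : ∑ a, |q a * f a| ≤
      Real.sqrt (Fintype.card A) * Real.sqrt (∑ a, (q a * f a) ^ 2) := by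
    have hcs := sq_sum_le_card_mul_sum_sq (s := (Finset.univ : Finset A))
      (f := fun a => |q a * f a|)
    have h' : (∑ a, |q a * f a|) ^ 2 ≤ (Fintype.card A : ℝ) * ∑ a, (q a * f a) ^ 2 := by
      simpa [Finset.card_univ, sq_abs, mul_pow] using hcs
    have := Real.sqrt_le_sqrt h'
    rwa [Real.sqrt_sq (Finset.sum_nonneg fun a _ => abs_nonneg _),
      Real.sqrt_mul (Nat.cast_nonneg _)] at this
  -- combine
  rw [div_mul_eq_mul_div, le_div_iff₀ hcpos]
  calc M * c = c * M := mul_comm _ _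
    _ ≤ _ := h1.trans h2
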